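/- arXiv:2008.00470 — 3 statements merged into one kernel-verified Lean document; each statement's English description precedes it below -/
import Mathlib

section
/- Let β₋ < β₊ be real numbers, D = (β₋, β₊), and let σ, η, γ, λ > 0 be constants. Suppose b : D → ℝ is bounded, twice continuously differentiable, and Lipschitz continuous, and let V : D → ℝ be a twice continuously differentiable solution of the reduced HJB equation (1/2)σ²V''(x) + b(x)V'(x) − λV(x) − (γV'(x) + 1)²/(4η) = 0 on D with V(x) → +∞ as x approaches either endpoint of D from inside. Then V blows up at the boundary like the logarithmic distance to the boundary: lim_{ε↓0} V(β₋ + ε)/(−log ε) = 2σ²η/γ² and lim_{ε↓0} V(β₊ − ε)/(−log ε) = 2σ²η/γ². -/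
open Set Filter Topology

/-- A function with bounded derivative on `(x₀, β)` has a finite limit at `β⁻`. -/
lemma exists_tendsto_of_bdd_deriv (f f' : ℝ → ℝ) (x₀ β M : ℝ) (hx : x₀ < β)
    (hd : ∀ x ∈ Ioo x₀ β, HasDerivAt f (f' x) x)
    (hM : ∀ x ∈ Ioo x₀ β, |f' x| ≤ M) :
    ∃ L, Tendsto f (𝓝[<] β) (𝓝 L) := by
  set m : ℝ := (x₀ + β) / 2 with hm
  have hmI : m ∈ Ioo x₀ β := ⟨by simp [hm]; linarith, by simp [hm]; linarith⟩
  have hM0 : 0 ≤ M := (abs_nonneg _).trans (hM m hmI)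
  -- g = f + M x is monotone on Ioo
  set g : ℝ → ℝ := fun x => f x + M * x with hg
  have hgd : ∀ x ∈ Ioo x₀ β, HasDerivAt g (f' x + M) x := fun x hxI =>
    (hd x hxI).add ((hasDerivAt_id x).const_mul M |>.congr_deriv (by ring))
  have hgmono : MonotoneOn g (Ioo x₀ β) := by
    apply monotoneOn_of_deriv_nonneg (convex_Ioo _ _)
    · exact fun x hxI => (hgd x hxI).continuousAt.continuousWithinAt
    · intro x hxI
      rw [interior_Ioo] at hxI
      exact (hgd x hxI).differentiableAt.differentiableWithinAt
    · intro x hxI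
      rw [interior_Ioo] at hxI
      rw [(hgd x hxI).deriv]
      have := (abs_le.1 (hM x hxI)).1
      linarith
  -- h = f - M x is antitone on Ioo
  set h : ℝ → ℝ := fun x => f x - M * x with hh
  have hhd : ∀ x ∈ Ioo x₀ β, HasDerivAt h (f' x - M) x := fun x hxI =>
    (hd x hxI).sub ((hasDerivAt_id x).const_mul M |>.congr_deriv (by ring))
  have hhanti : AntitoneOn h (Ioo x₀ β) := by
    apply antitoneOn_of_deriv_nonpos (convex_Ioo _ _)
    · exact fun x hxI => (hhd x hxI).continuousAt.continuousWithinAt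
    · intro x hxI
      rw [interior_Ioo] at hxI
      exact (hhd x hxI).differentiableAt.differentiableWithinAt
    · intro x hxI
      rw [interior_Ioo] at hxI
      rw [(hhd x hxI).deriv]
      have := (abs_le.1 (hM x hxI)).2
      linarith
  have hbdd : BddAbove (g '' Ioo x₀ β) := by
    refine ⟨max (g m) (f m - M * m + 2 * M * β), ?_⟩
    rintro _ ⟨x, hxI, rfl⟩
    rcases le_total x m with hxm | hxm
    · exact le_max_of_le_left (hgmono hxI hmI hxm)
    · refine le_max_of_le_right ?_
      have := hhanti hmI hxI hxm
      simp only [hh] at this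
      have hxβ : x < β := hxI.2
      have h2 : M * x ≤ M * β := mul_le_mul_of_nonneg_left hxβ.le hM0
      simp only [hg]
      linarith
  obtain hT := MonotoneOn.tendsto_nhdsWithin_Ioo_left ⟨m, hmI⟩ hgmono hbdd
  refine ⟨sSup (g '' Ioo x₀ β) - M * β, ?_⟩
  have hMx : Tendsto (fun x : ℝ => M * x) (𝓝[<] β) (𝓝 (M * β)) :=
    ((continuous_const.mul continuous_id).tendsto β).mono_left nhdsWithin_le_nhds
  have : Tendsto (fun x => g x - M * x) (𝓝[<] β) (𝓝 (sSup (g '' Ioo x₀ β) - M * β)) :=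
    hT.sub hMx
  exact this.congr (fun x => by simp [hg])

set_option maxHeartbeats 2000000 in
lemma hjb_master (α β σ η γ lam s : ℝ) (hαβ : α < β)
    (hσ : 0 < σ) (hη : 0 < η) (hγ : 0 < γ) (hlam : 0 < lam)
    (b V V₁ V₂ : ℝ → ℝ)
    (hb_cont : ContinuousOn b (Ioo α β))
    (C : ℝ) (hb_bdd : ∀ x ∈ Ioo α β, |b x| ≤ C)
    (hV1 : ∀ x ∈ Ioo α β, HasDerivAt V (V₁ x) x)
    (hV2 : ∀ x ∈ Ioo α β, HasDerivAt V₁ (V₂ x) x)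
    (hhjb : ∀ x ∈ Ioo α β,
      (1/2) * σ^2 * V₂ x + b x * V₁ x - lam * V x - (γ * V₁ x + s)^2 / (4*η) = 0)
    (hVb : Tendsto V (𝓝[<] β) atTop) :
    Tendsto (fun ε : ℝ => V (β - ε) / (-Real.log ε)) (𝓝[>] (0:ℝ))
      (𝓝 (2*σ^2*η/γ^2)) := by
  have hσ2 : (0:ℝ) < σ^2 := by positivity
  set a : ℝ := 2*σ^2*η/γ^2 with hadef
  have ha : 0 < a := by positivity
  have hC : 0 ≤ C := le_trans (abs_nonneg _) (hb_bdd ((α+β)/2) ⟨by linarith, by linarith⟩)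
  -- the transformed function u and its derivatives
  set w : ℝ → ℝ := fun x => -((V₁ x + s/γ)/a) with hwdef
  set u : ℝ → ℝ := fun x => Real.exp (-((V x + s*x/γ)/a)) with hudef
  set u₁ : ℝ → ℝ := fun x => u x * w x with hu1def
  set u₂ : ℝ → ℝ := fun x => u₁ x * w x + u x * (-(V₂ x / a)) with hu2def
  set p : ℝ → ℝ := fun x => -(2 * b x) / σ^2 with hpdef
  set Q : ℝ → ℝ := fun x => (2*lam/σ^2) * (-((V x + s*x/γ)/a))
      + (2*s/(σ^2*a*γ))*(lam*x - b x) with hQdef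
  have hu_pos : ∀ x, 0 < u x := fun x => Real.exp_pos _
  have hlogu : ∀ x, Real.log (u x) = -((V x + s*x/γ)/a) := fun x => Real.log_exp _
  have hwd : ∀ x ∈ Ioo α β, HasDerivAt w (-(V₂ x / a)) x := by
    intro x hx
    exact (((hV2 x hx).add_const (s/γ)).div_const a).neg
  have hud : ∀ x ∈ Ioo α β, HasDerivAt u (u₁ x) x := by
    intro x hx
    have h1 : HasDerivAt (fun y => s*y/γ) (s/γ) x := by
      simpa using ((hasDerivAt_id x).const_mul s).div_const γ
    have h2 : HasDerivAt (fun y => -((V y + s*y/γ)/a)) (w x) x :=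
      (((hV1 x hx).add h1).div_const a).neg
    simpa [hu1def, mul_comm] using h2.exp
  have hu1d : ∀ x ∈ Ioo α β, HasDerivAt u₁ (u₂ x) x := by
    intro x hx
    exact (hud x hx).mul (hwd x hx)
  -- key algebraic identity (equivalent to the HJB equation)
  have hkey : ∀ x ∈ Ioo α β, u₂ x = p x * u₁ x + Q x * u x := by
    intro x hx
    have h := hhjb x hx
    have hcoef : w x ^ 2 - V₂ x / a - (p x * w x + Q x)
        = (-2/(σ^2*a)) * ((1/2) * σ^2 * V₂ x + b x * V₁ x - lam * V x
            - (γ * V₁ x + s)^2 / (4*η)) := by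
      simp only [hwdef, hpdef, hQdef, hadef]
      field_simp
      ring
    rw [h, mul_zero, sub_eq_zero] at hcoef
    have : u₂ x = u x * (w x ^ 2 - V₂ x / a) := by simp only [hu2def, hu1def]; ring
    rw [this, hcoef]; ring
  -- u tends to 0 at β from the left
  have hu0 : Tendsto u (𝓝[<] β) (𝓝 0) := by
    have h1 : Tendsto (fun x => V x + s*x/γ) (𝓝[<] β) atTop := by
      apply hVb.atTop_add (C := s*β/γ)
      exact (((continuous_const.mul continuous_id).div_const γ).tendsto β).mono_left
        nhdsWithin_le_nhds
    have h2 : Tendsto (fun x => -((V x + s*x/γ)/a)) (𝓝[<] β) atBot :=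
      tendsto_neg_atBot_iff.2 (Tendsto.atTop_div_const ha h1)
    exact Real.tendsto_exp_atBot.comp h2
  -- constants
  set R : ℝ := (2*|s|/(σ^2*a*γ))*(lam*(|α|+|β|) + C) with hRdef
  have hR : 0 ≤ R := by positivity
  have hQbound : ∀ x ∈ Ioo α β, |(2*s/(σ^2*a*γ))*(lam*x - b x)| ≤ R := by
    intro x hx
    rw [hRdef, abs_mul]
    have h1 : |(2*s/(σ^2*a*γ))| = 2*|s|/(σ^2*a*γ) := by
      rw [abs_div, abs_of_pos (by positivity : (0:ℝ) < σ^2*a*γ), abs_mul]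
      norm_num
    rw [h1]
    apply mul_le_mul_of_nonneg_left _ (by positivity)
    have hxb : |x| ≤ |α| + |β| := by
      rw [abs_le]
      constructor
      · have := neg_abs_le α; have := abs_nonneg β; linarith [hx.1.le]
      · have := le_abs_self β; have := abs_nonneg α; linarith [hx.2.le]
    calc |lam*x - b x| ≤ |lam*x| + |b x| := abs_sub _ _
      _ ≤ lam*(|α|+|β|) + C := by
          rw [abs_mul, abs_of_pos hlam]
          exact add_le_add (mul_le_mul_of_nonneg_left hxb hlam.le) (hb_bdd x hx)
  -- choose x₀ near β where u is small
  set δ : ℝ := min (Real.exp (-1)) (Real.exp (-(R*σ^2/(2*lam)))) with hδdef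
  have hδ : 0 < δ := lt_min (Real.exp_pos _) (Real.exp_pos _)
  obtain ⟨l, hl, hlsub⟩ : ∃ l ∈ Iio β, Ioo l β ⊆ {x | u x < δ} :=
    mem_nhdsLT_iff_exists_Ioo_subset.1 (hu0.eventually (Iio_mem_nhds hδ))
  set x₀ : ℝ := max l ((α+β)/2) with hx₀def
  have hx₀ : x₀ ∈ Ioo α β := ⟨lt_of_lt_of_le (by linarith) (le_max_right _ _),
    max_lt hl (by linarith)⟩
  have hsub : Ioo x₀ β ⊆ Ioo α β := fun x hx => ⟨lt_trans hx₀.1 hx.1, hx.2⟩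
  have husmall : ∀ x ∈ Ioo x₀ β, u x < δ := fun x hx =>
    hlsub ⟨lt_of_le_of_lt (le_max_left _ _) hx.1, hx.2⟩
  -- on (x₀, β) : Q ≤ 0 and |Q * u| bounded
  have hlogu_neg : ∀ x ∈ Ioo x₀ β, Real.log (u x) ≤ -1 := by
    intro x hx
    calc Real.log (u x) ≤ Real.log (Real.exp (-1)) :=
          Real.log_le_log (hu_pos x) (le_trans (husmall x hx).le (min_le_left _ _))
      _ = -1 := Real.log_exp _
  have hQneg : ∀ x ∈ Ioo x₀ β, Q x ≤ 0 := by
    intro x hx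
    have h1 : Real.log (u x) ≤ -(R*σ^2/(2*lam)) := by
      calc Real.log (u x) ≤ Real.log (Real.exp (-(R*σ^2/(2*lam)))) :=
            Real.log_le_log (hu_pos x) (le_trans (husmall x hx).le (min_le_right _ _))
        _ = _ := Real.log_exp _
    have h2 : (2*lam/σ^2) * Real.log (u x) ≤ -R := by
      rw [div_mul_eq_mul_div, div_le_iff₀ hσ2]
      have := mul_le_mul_of_nonneg_left h1 (by positivity : (0:ℝ) ≤ 2*lam)
      calc 2*lam*Real.log (u x) ≤ 2*lam*(-(R*σ^2/(2*lam))) := this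
        _ = -R * σ^2 := by field_simp
    have h3 := (abs_le.1 (hQbound x (hsub hx))).2
    have : Q x = (2*lam/σ^2) * Real.log (u x) + (2*s/(σ^2*a*γ))*(lam*x - b x) := by
      rw [hQdef]; simp only [hlogu x]
    rw [this]
    calc (2*lam/σ^2) * Real.log (u x) + (2*s/(σ^2*a*γ))*(lam*x - b x)
        ≤ -R + R := add_le_add h2 h3
      _ = 0 := by ring
  have hulogu : ∀ x ∈ Ioo x₀ β, u x * |Real.log (u x)| ≤ 1 := by
    intro x hx
    have h0 := hu_pos x
    have h1 : |Real.log (u x)| = -Real.log (u x) :=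
      abs_of_nonpos (le_trans (hlogu_neg x hx) (by norm_num))
    have h2 : -Real.log (u x) = Real.log (u x)⁻¹ := (Real.log_inv _).symm
    have h3 : Real.log (u x)⁻¹ ≤ (u x)⁻¹ - 1 :=
      Real.log_le_sub_one_of_pos (by positivity)
    rw [h1, h2]
    calc u x * Real.log (u x)⁻¹ ≤ u x * ((u x)⁻¹ - 1) :=
          mul_le_mul_of_nonneg_left h3 h0.le
      _ = 1 - u x := by field_simp
      _ ≤ 1 := by linarith
  have hu_le_one : ∀ x ∈ Ioo x₀ β, u x ≤ 1 := by
    intro x hx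
    calc u x ≤ Real.exp (-1) := le_trans (husmall x hx).le (min_le_left _ _)
      _ ≤ 1 := by rw [Real.exp_le_one_iff]; norm_num
  set C'' : ℝ := 2*lam/σ^2 + R with hC''def
  have hQubound : ∀ x ∈ Ioo x₀ β, |Q x * u x| ≤ C'' := by
    intro x hx
    have h0 := hu_pos x
    rw [abs_mul, abs_of_pos h0]
    have h1 : |Q x| ≤ (2*lam/σ^2) * |Real.log (u x)| + R := by
      have : Q x = (2*lam/σ^2) * Real.log (u x) + (2*s/(σ^2*a*γ))*(lam*x - b x) := by
        rw [hQdef]; simp only [hlogu x]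
      rw [this]
      calc |(2*lam/σ^2) * Real.log (u x) + (2*s/(σ^2*a*γ))*(lam*x - b x)|
          ≤ |(2*lam/σ^2) * Real.log (u x)| + |(2*s/(σ^2*a*γ))*(lam*x - b x)| := abs_add_le _ _
        _ ≤ (2*lam/σ^2) * |Real.log (u x)| + R := by
            rw [abs_mul, abs_of_pos (by positivity : (0:ℝ) < 2*lam/σ^2)]
            exact add_le_add le_rfl (hQbound x (hsub hx))
    calc |Q x| * u x ≤ ((2*lam/σ^2) * |Real.log (u x)| + R) * u x :=
          mul_le_mul_of_nonneg_right h1 h0.le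
      _ = (2*lam/σ^2) * (u x * |Real.log (u x)|) + R * u x := by ring
      _ ≤ (2*lam/σ^2) * 1 + R * 1 := by
          gcongr
          · exact hulogu x hx
          · exact hu_le_one x hx
      _ = C'' := by rw [hC''def]; ring
  -- the integrating factor B
  set P : ℝ := 2*C/σ^2 with hPdef
  have hP : 0 ≤ P := by positivity
  have hp_cont : ContinuousOn p (Ioo α β) := by
    rw [hpdef]
    exact ((continuousOn_const.mul hb_cont).neg).div_const _
  have hp_bdd : ∀ x ∈ Ioo α β, |p x| ≤ P := by
    intro x hx
    rw [hpdef, hPdef, abs_div, abs_of_pos hσ2, abs_neg, abs_mul, abs_two]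
    gcongr
    exact hb_bdd x hx
  set B : ℝ → ℝ := fun x => ∫ t in x₀..x, p t with hBdef
  have hBd : ∀ x ∈ Ioo α β, HasDerivAt B (p x) x := by
    intro x hx
    have huIcc : uIcc x₀ x ⊆ Ioo α β := by
      apply Set.OrdConnected.uIcc_subset Set.ordConnected_Ioo hx₀ hx
    apply intervalIntegral.integral_hasDerivAt_right
    · exact (hp_cont.mono huIcc).intervalIntegrable
    · exact hp_cont.stronglyMeasurableAtFilter isOpen_Ioo x hx
    · exact (hp_cont x hx).continuousAt (isOpen_Ioo.mem_nhds hx)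
  set MB : ℝ := P * (β - x₀) with hMBdef
  have hMB : 0 ≤ MB := by
    apply mul_nonneg hP; linarith [hx₀.2]
  have hBbound : ∀ x ∈ Ioo x₀ β, |B x| ≤ MB := by
    intro x hx
    have h1 : ∀ t ∈ Set.uIoc x₀ x, ‖p t‖ ≤ P := by
      intro t ht
      rw [uIoc_of_le hx.1.le] at ht
      exact hp_bdd t (hsub ⟨ht.1, lt_of_le_of_lt ht.2 hx.2⟩)
    calc |B x| ≤ P * |x - x₀| := intervalIntegral.norm_integral_le_of_norm_le_const h1
      _ ≤ MB := by
          rw [hMBdef, abs_of_nonneg (by linarith [hx.1] : (0:ℝ) ≤ x - x₀)]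
          have : x - x₀ ≤ β - x₀ := by linarith [hx.2]
          exact mul_le_mul_of_nonneg_left this hP
  -- the auxiliary function φ = u₁ * exp (-B) is antitone with bounded derivative
  set φ : ℝ → ℝ := fun x => u₁ x * Real.exp (-(B x)) with hφdef
  have hφd : ∀ x ∈ Ioo x₀ β, HasDerivAt φ (Q x * u x * Real.exp (-(B x))) x := by
    intro x hx
    have h1 : HasDerivAt (fun y => Real.exp (-(B y))) (Real.exp (-(B x)) * (-(p x))) x :=
      ((hBd x (hsub hx)).neg).exp
    have h2 := (hu1d x (hsub hx)).mul h1
    have h3 : u₂ x * Real.exp (-(B x)) + u₁ x * (Real.exp (-(B x)) * -p x)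
        = Q x * u x * Real.exp (-(B x)) := by
      rw [hkey x (hsub hx)]; ring
    rw [h3] at h2
    exact h2
  have hφanti : AntitoneOn φ (Ioo x₀ β) := by
    apply antitoneOn_of_deriv_nonpos (convex_Ioo _ _)
    · exact fun x hx => (hφd x hx).continuousAt.continuousWithinAt
    · intro x hx
      rw [interior_Ioo] at hx
      exact (hφd x hx).differentiableAt.differentiableWithinAt
    · intro x hx
      rw [interior_Ioo] at hx
      rw [(hφd x hx).deriv]
      have h1 := hQneg x hx
      have h2 := (hu_pos x).le
      have h3 := (Real.exp_pos (-(B x))).le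
      have : Q x * u x ≤ 0 := mul_nonpos_of_nonpos_of_nonneg h1 h2
      exact mul_nonpos_of_nonpos_of_nonneg this h3
  set Mφ : ℝ := C'' * Real.exp MB with hMφdef
  have hφbdd : ∀ x ∈ Ioo x₀ β, |Q x * u x * Real.exp (-(B x))| ≤ Mφ := by
    intro x hx
    rw [abs_mul, hMφdef]
    apply mul_le_mul (hQubound x hx) _ (abs_nonneg _)
      (le_trans (abs_nonneg _) (hQubound x hx))
    rw [abs_of_pos (Real.exp_pos _), Real.exp_le_exp]
    linarith [(abs_le.1 (hBbound x hx)).1]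
  -- limits of φ, B and u₁ at β⁻
  obtain ⟨Lφ, hLφ⟩ : ∃ L, Tendsto φ (𝓝[<] β) (𝓝 L) :=
    exists_tendsto_of_bdd_deriv φ (fun x => Q x * u x * Real.exp (-(B x))) x₀ β Mφ hx₀.2
      hφd hφbdd
  obtain ⟨LB, hLB⟩ : ∃ L, Tendsto B (𝓝[<] β) (𝓝 L) :=
    exists_tendsto_of_bdd_deriv B p x₀ β P hx₀.2 (fun x hx => hBd x (hsub hx))
      (fun x hx => hp_bdd x (hsub hx))
  set L : ℝ := Lφ * Real.exp LB with hLdef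
  have hu1T : Tendsto u₁ (𝓝[<] β) (𝓝 L) := by
    have h1 : Tendsto (fun x => φ x * Real.exp (B x)) (𝓝[<] β) (𝓝 L) :=
      hLφ.mul ((Real.continuous_exp.tendsto _).comp hLB)
    apply h1.congr
    intro x
    show u₁ x * Real.exp (-(B x)) * Real.exp (B x) = u₁ x
    rw [mul_assoc, ← Real.exp_add]
    simp
  -- L is negative
  have hL : L < 0 := by
    -- find a point with negative derivative of u
    set p₁ : ℝ := (x₀ + β)/2 with hp₁def
    have hp₁ : p₁ ∈ Ioo x₀ β := ⟨by rw [hp₁def]; linarith [hx₀.2], by rw [hp₁def]; linarith [hx₀.2]⟩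
    obtain ⟨p₂, hp₂u, hp₂I⟩ : ∃ p₂, u p₂ < u p₁ ∧ p₂ ∈ Ioo p₁ β := by
      have h1 : ∀ᶠ x in 𝓝[<] β, u x < u p₁ := hu0.eventually (Iio_mem_nhds (hu_pos p₁))
      have h2 : Ioo p₁ β ∈ 𝓝[<] β := Ioo_mem_nhdsLT hp₁.2
      exact (h1.and (eventually_mem_set.2 h2)).exists
    obtain ⟨c, hcI, hc⟩ := exists_hasDerivAt_eq_slope u u₁ hp₂I.1
      (fun x hx => (hud x (hsub ⟨lt_of_lt_of_le hp₁.1 hx.1,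
        lt_of_le_of_lt hx.2 hp₂I.2⟩)).continuousAt.continuousWithinAt)
      (fun x hx => hud x (hsub ⟨lt_trans hp₁.1 hx.1, lt_trans hx.2 hp₂I.2⟩))
    have hc_neg : u₁ c < 0 := by
      rw [hc]
      apply div_neg_of_neg_of_pos (by linarith) (by linarith [hcI.1, hcI.2])
    have hcI' : c ∈ Ioo x₀ β := ⟨lt_trans hp₁.1 hcI.1, lt_trans hcI.2 hp₂I.2⟩
    have hφc : φ c < 0 := mul_neg_of_neg_of_pos hc_neg (Real.exp_pos _)
    have hLφ_le : Lφ ≤ φ c := by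
      apply le_of_tendsto hLφ
      filter_upwards [Ioo_mem_nhdsLT hcI'.2] with y hy
      exact hφanti hcI' ⟨lt_trans hcI'.1 hy.1, hy.2⟩ hy.1.le
    rw [hLdef]
    exact mul_neg_of_neg_of_pos (lt_of_le_of_lt hLφ_le hφc) (Real.exp_pos _)
  -- the slope limit : u x / (β - x) → -L
  have hslope : Tendsto (fun x => u x / (β - x)) (𝓝[<] β) (𝓝 (-L)) := by
    rw [Metric.tendsto_nhdsWithin_nhds]
    intro ε hε
    set ε₁ : ℝ := ε/2 with hε₁def
    have hε₁ : 0 < ε₁ := by rw [hε₁def]; linarith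
    obtain ⟨l₃, hl₃, hl₃sub⟩ : ∃ l₃ ∈ Iio β, Ioo l₃ β ⊆ {x | |u₁ x - L| < ε₁} := by
      apply mem_nhdsLT_iff_exists_Ioo_subset.1
      have := hu1T.eventually (eventually_abs_sub_lt L hε₁)
      exact this
    set x₃ : ℝ := max l₃ x₀ with hx₃def
    have hx₃β : x₃ < β := max_lt hl₃ hx₀.2
    have hx₃0 : x₀ ≤ x₃ := le_max_right _ _
    have hsub3 : Ioo x₃ β ⊆ Ioo x₀ β := fun x hx => ⟨lt_of_le_of_lt hx₃0 hx.1, hx.2⟩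
    have hnear : ∀ x ∈ Ioo x₃ β, |u₁ x - L| < ε₁ := fun x hx =>
      hl₃sub ⟨lt_of_le_of_lt (le_max_left _ _) hx.1, hx.2⟩
    -- upper bound : u x ≤ (-L+ε₁)(β-x)
    have hup : ∀ x ∈ Ioo x₃ β, u x ≤ (-L+ε₁)*(β-x) := by
      intro x hx
      have hder : ∀ y ∈ Ioo x₃ β, HasDerivAt (fun y => u y - (L-ε₁)*y) (u₁ y - (L-ε₁)) y := by
        intro y hy
        have h0 : HasDerivAt (fun y : ℝ => (L-ε₁)*y) (L-ε₁) y := by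
          simpa using (hasDerivAt_id y).const_mul (L-ε₁)
        exact (hud y (hsub (hsub3 hy))).sub h0
      have hmono : MonotoneOn (fun y => u y - (L-ε₁)*y) (Ioo x₃ β) := by
        apply monotoneOn_of_deriv_nonneg (convex_Ioo _ _)
        · exact fun y hy => (hder y hy).continuousAt.continuousWithinAt
        · intro y hy
          rw [interior_Ioo] at hy
          exact (hder y hy).differentiableAt.differentiableWithinAt
        · intro y hy
          rw [interior_Ioo] at hy
          rw [(hder y hy).deriv]
          have := (abs_lt.1 (hnear y hy)).1
          linarith
      have hev : ∀ᶠ y in 𝓝[<] β, u x ≤ u y - (L-ε₁)*(y-x) := by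
        filter_upwards [Ioo_mem_nhdsLT hx.2] with y hy
        have := hmono hx ⟨lt_trans hx.1 hy.1, hy.2⟩ hy.1.le
        simp only at this
        nlinarith [this]
      have hT : Tendsto (fun y => u y - (L-ε₁)*(y-x)) (𝓝[<] β) (𝓝 (0 - (L-ε₁)*(β-x))) := by
        apply hu0.sub
        exact ((continuous_const.mul (continuous_id.sub continuous_const)).tendsto β).mono_left
          nhdsWithin_le_nhds
      have := ge_of_tendsto hT hev
      linarith
    -- lower bound : u x ≥ (-L-ε₁)(β-x)
    have hlo : ∀ x ∈ Ioo x₃ β, (-L-ε₁)*(β-x) ≤ u x := by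
      intro x hx
      have hder : ∀ y ∈ Ioo x₃ β, HasDerivAt (fun y => u y - (L+ε₁)*y) (u₁ y - (L+ε₁)) y := by
        intro y hy
        have h0 : HasDerivAt (fun y : ℝ => (L+ε₁)*y) (L+ε₁) y := by
          simpa using (hasDerivAt_id y).const_mul (L+ε₁)
        exact (hud y (hsub (hsub3 hy))).sub h0
      have hanti : AntitoneOn (fun y => u y - (L+ε₁)*y) (Ioo x₃ β) := by
        apply antitoneOn_of_deriv_nonpos (convex_Ioo _ _)
        · exact fun y hy => (hder y hy).continuousAt.continuousWithinAt
        · intro y hy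
          rw [interior_Ioo] at hy
          exact (hder y hy).differentiableAt.differentiableWithinAt
        · intro y hy
          rw [interior_Ioo] at hy
          rw [(hder y hy).deriv]
          have := (abs_lt.1 (hnear y hy)).2
          linarith
      have hev : ∀ᶠ y in 𝓝[<] β, u y - (L+ε₁)*(y-x) ≤ u x := by
        filter_upwards [Ioo_mem_nhdsLT hx.2] with y hy
        have := hanti hx ⟨lt_trans hx.1 hy.1, hy.2⟩ hy.1.le
        simp only at this
        nlinarith [this]
      have hT : Tendsto (fun y => u y - (L+ε₁)*(y-x)) (𝓝[<] β) (𝓝 (0 - (L+ε₁)*(β-x))) := by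
        apply hu0.sub
        exact ((continuous_const.mul (continuous_id.sub continuous_const)).tendsto β).mono_left
          nhdsWithin_le_nhds
      have := le_of_tendsto hT hev
      linarith
    refine ⟨β - x₃, by linarith, ?_⟩
    intro x hxIio hxd
    have hxI : x ∈ Ioo x₃ β := by
      constructor
      · have hxβ : x < β := hxIio
        rw [Real.dist_eq, abs_of_neg (by linarith : x - β < 0)] at hxd
        linarith
      · exact hxIio
    have hβx : 0 < β - x := by linarith [hxI.2]
    rw [Real.dist_eq]
    have h1 : u x / (β-x) ≤ -L + ε₁ := by
      rw [div_le_iff₀ hβx]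
      exact hup x hxI
    have h2 : -L - ε₁ ≤ u x / (β-x) := by
      rw [le_div_iff₀ hβx]
      exact hlo x hxI
    rw [abs_lt]
    constructor <;> [linarith; linarith]
  -- final assembly
  have hLpos : 0 < -L := by linarith
  have hlog : Tendsto (fun x => Real.log (u x / (β - x))) (𝓝[<] β) (𝓝 (Real.log (-L))) :=
    ((Real.continuousAt_log hLpos.ne').tendsto).comp hslope
  have hmap : Tendsto (fun ε : ℝ => β - ε) (𝓝[>] (0:ℝ)) (𝓝[<] β) := by
    apply tendsto_nhdsWithin_of_tendsto_nhds_of_eventually_within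
    · have h0 : Tendsto (fun ε : ℝ => β - ε) (𝓝 (0:ℝ)) (𝓝 (β - 0)) :=
        (continuous_const.sub continuous_id).tendsto 0
      rw [sub_zero] at h0
      exact h0.mono_left nhdsWithin_le_nhds
    · filter_upwards [self_mem_nhdsWithin] with ε (hε : 0 < ε)
      exact sub_lt_self β hε
  have hg : Tendsto (fun ε : ℝ => Real.log (u (β-ε) / (β - (β-ε)))) (𝓝[>] (0:ℝ))
      (𝓝 (Real.log (-L))) := hlog.comp hmap
  have hinv : Tendsto (fun ε : ℝ => (-Real.log ε)⁻¹) (𝓝[>] (0:ℝ)) (𝓝 0) := by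
    have h1 : Tendsto (fun ε : ℝ => -Real.log ε) (𝓝[>] (0:ℝ)) atTop :=
      tendsto_neg_atBot_atTop.comp Real.tendsto_log_nhdsGT_zero
    exact h1.inv_tendsto_atTop
  have hsβγ : Tendsto (fun ε : ℝ => s*(β-ε)/γ) (𝓝[>] (0:ℝ)) (𝓝 (s*(β-0)/γ)) :=
    (((continuous_const.mul (continuous_const.sub continuous_id)).div_const γ).tendsto 0
      ).mono_left nhdsWithin_le_nhds
  have hmain : Tendsto (fun ε : ℝ => a + (-(a * Real.log (u (β-ε) / (β - (β-ε)))
      + s*(β-ε)/γ)) * (-Real.log ε)⁻¹) (𝓝[>] (0:ℝ))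
      (𝓝 (a + (-(a * Real.log (-L) + s*(β-0)/γ)) * 0)) :=
    tendsto_const_nhds.add ((((hg.const_mul a).add hsβγ).neg).mul hinv)
  rw [mul_zero, add_zero] at hmain
  apply hmain.congr'
  filter_upwards [Ioo_mem_nhdsGT (by norm_num : (0:ℝ) < 1)] with ε hε
  have hε0 : 0 < ε := hε.1
  have hlogε : Real.log ε < 0 := Real.log_neg hε0 hε.2
  have hβε : β - (β - ε) = ε := by ring
  rw [hβε]
  have h1 : Real.log (u (β-ε) / ε) = Real.log (u (β-ε)) - Real.log ε :=
    Real.log_div (hu_pos _).ne' hε0.ne'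
  have h2 : V (β-ε) = -a * Real.log (u (β-ε)) - s*(β-ε)/γ := by
    have h3 := hlogu (β-ε)
    have h4 : -a * Real.log (u (β-ε)) = V (β-ε) + s*(β-ε)/γ := by
      rw [h3]; field_simp
    linarith
  rw [h2, h1]
  have hne : Real.log ε ≠ 0 := ne_of_lt hlogε
  field_simp [hne]
  ring


set_option maxHeartbeats 1000000 in
/-- The solution of the singular boundary value problem for the reduced HJB equation
blows up at the boundary like the logarithmic distance to the boundary:
`lim_{ε↓0} V(β₋+ε)/(−log ε) = 2σ²η/γ² = lim_{ε↓0} V(β₊−ε)/(−log ε)`. -/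
theorem hjb_log_blowup (βm βp σ η γ lam : ℝ) (hβ : βm < βp)
    (hσ : 0 < σ) (hη : 0 < η) (hγ : 0 < γ) (hlam : 0 < lam)
    (b : ℝ → ℝ)
    (hb_bdd : ∃ C : ℝ, ∀ x ∈ Ioo βm βp, |b x| ≤ C)
    (hb_smooth : ContDiffOn ℝ 2 b (Ioo βm βp))
    (hb_lip : ∃ K : NNReal, LipschitzOnWith K b (Ioo βm βp))
    (V : ℝ → ℝ)
    (hV_smooth : ContDiffOn ℝ 2 V (Ioo βm βp))
    (hV_hjb : ∀ x ∈ Ioo βm βp,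
      (1/2) * σ^2 * deriv (deriv V) x + b x * deriv V x - lam * V x
        - (γ * deriv V x + 1)^2 / (4*η) = 0)
    (hV_bm : Tendsto V (𝓝[>] βm) atTop) (hV_bp : Tendsto V (𝓝[<] βp) atTop) :
    Tendsto (fun ε : ℝ => V (βm + ε) / (-Real.log ε)) (𝓝[>] (0:ℝ))
      (𝓝 (2*σ^2*η/γ^2)) ∧
    Tendsto (fun ε : ℝ => V (βp - ε) / (-Real.log ε)) (𝓝[>] (0:ℝ))
      (𝓝 (2*σ^2*η/γ^2)) := by
  obtain ⟨C, hC⟩ := hb_bdd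
  have hopen : IsOpen (Ioo βm βp) := isOpen_Ioo
  have hb_cont : ContinuousOn b (Ioo βm βp) := hb_smooth.continuousOn
  have hV1 : ∀ x ∈ Ioo βm βp, HasDerivAt V (deriv V x) x := fun x hx =>
    ((hV_smooth.differentiableOn (by norm_num)).differentiableAt
      (hopen.mem_nhds hx)).hasDerivAt
  have hdV : ContDiffOn ℝ 1 (deriv V) (Ioo βm βp) := by
    have h := hV_smooth.deriv_of_isOpen hopen (m := 1) (by norm_num)
    exact h
  have hV2 : ∀ x ∈ Ioo βm βp, HasDerivAt (deriv V) (deriv (deriv V) x) x := fun x hx =>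
    ((hdV.differentiableOn (by norm_num)).differentiableAt (hopen.mem_nhds hx)).hasDerivAt
  constructor
  · -- left endpoint, via reflection x ↦ βm + βp - x
    set c : ℝ := βm + βp with hcdef
    have hmem : ∀ x ∈ Ioo βm βp, c - x ∈ Ioo βm βp := fun x hx =>
      ⟨by rw [hcdef]; linarith [hx.2], by rw [hcdef]; linarith [hx.1]⟩
    have hin : ∀ x : ℝ, HasDerivAt (fun y : ℝ => c - y) (-1) x := fun x => by
      simpa using (hasDerivAt_id x).const_sub c
    have hV1r : ∀ x ∈ Ioo βm βp, HasDerivAt (fun y => V (c - y)) (-(deriv V (c-x))) x := by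
      intro x hx
      have h := HasDerivAt.comp x (hV1 (c-x) (hmem x hx)) (hin x)
      exact h.congr_deriv (by ring)
    have hV2r : ∀ x ∈ Ioo βm βp,
        HasDerivAt (fun y => -(deriv V (c - y))) (deriv (deriv V) (c-x)) x := by
      intro x hx
      have h := (HasDerivAt.comp x (hV2 (c-x) (hmem x hx)) (hin x)).neg
      exact h.congr_deriv (by ring)
    have hjbr : ∀ x ∈ Ioo βm βp,
        (1/2) * σ^2 * deriv (deriv V) (c-x) + (-b (c-x)) * (-(deriv V (c-x)))
          - lam * V (c-x) - (γ * (-(deriv V (c-x))) + (-1))^2 / (4*η) = 0 := by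
      intro x hx
      have h := hV_hjb (c-x) (hmem x hx)
      linear_combination h
    have hbr_cont : ContinuousOn (fun x => -b (c - x)) (Ioo βm βp) :=
      (hb_cont.comp ((continuous_const.sub continuous_id).continuousOn)
        (fun x hx => hmem x hx)).neg
    have hbr_bdd : ∀ x ∈ Ioo βm βp, |(fun x => -b (c - x)) x| ≤ C := fun x hx => by
      simpa using hC _ (hmem x hx)
    have hmaps : Tendsto (fun x : ℝ => c - x) (𝓝[<] βp) (𝓝[>] βm) := by
      apply tendsto_nhdsWithin_of_tendsto_nhds_of_eventually_within
      · have h0 : Tendsto (fun x : ℝ => c - x) (𝓝 βp) (𝓝 (c - βp)) :=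
          (continuous_const.sub continuous_id).tendsto βp
        have : c - βp = βm := by rw [hcdef]; ring
        rw [this] at h0
        exact h0.mono_left nhdsWithin_le_nhds
      · filter_upwards [self_mem_nhdsWithin] with x (hx : x < βp)
        show βm < c - x
        rw [hcdef]; linarith
    have hVr : Tendsto (fun x => V (c - x)) (𝓝[<] βp) atTop := hV_bm.comp hmaps
    have h := hjb_master βm βp σ η γ lam (-1) hβ hσ hη hγ hlam
      (fun x => -b (c - x)) (fun x => V (c - x)) (fun x => -(deriv V (c-x)))
      (fun x => deriv (deriv V) (c-x)) hbr_cont C hbr_bdd hV1r hV2r hjbr hVr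
    apply h.congr
    intro ε
    have : c - (βp - ε) = βm + ε := by rw [hcdef]; ring
    rw [this]
  · -- right endpoint, directly
    have hjb1 : ∀ x ∈ Ioo βm βp,
        (1/2) * σ^2 * deriv (deriv V) x + b x * deriv V x - lam * V x
          - (γ * deriv V x + 1)^2 / (4*η) = 0 := hV_hjb
    exact hjb_master βm βp σ η γ lam 1 hβ hσ hη hγ hlam b V (deriv V)
      (deriv (deriv V)) hb_cont C hC hV1 hV2 hjb1 hV_bp
end

section
/- Let β₋ < β₊ be real numbers, D = (β₋, β₊), and let σ, η, γ, λ > 0 be constants. Suppose b : D → ℝ is bounded, twice continuously differentiable, and Lipschitz continuous, and fix x₀ ∈ D. For a twice continuously differentiable function V : D → ℝ define W(x) = (γ/(2ησ²))·(γV(x) + x − (2η/γ)·∫_{x₀}^{x} b(y) dy), and define f(x) = −(γ/(σ⁴η))·b(x) + (1/σ²)·b'(x) + (1/σ⁴)·b(x)² + (γλ/(σ⁴η))·x − (2λ/σ⁴)·∫_{x₀}^{x} b(y) dy. Then V satisfies the reduced HJB equation (1/2)σ²V''(x) + b(x)V'(x) − λV(x) − (γV'(x) + 1)²/(4η) = 0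 for all x ∈ D if and only if W satisfies −W''(x) + (W'(x))² + (2λ/σ²)·W(x) = f(x) for all x ∈ D. -/
open Set Filter Topology

/-- The transformation `W(x) = (γ/(2ησ²))(γV(x) + x − (2η/γ)∫_{x₀}^x b)` turns the reduced
HJB equation for `V` into the Lasry–Lions equation `−W'' + (W')² + (2λ/σ²)W = f` on `D`. -/
theorem hjb_transformation (βm βp σ η γ lam x₀ : ℝ) (hβ : βm < βp)
    (hσ : 0 < σ) (hη : 0 < η) (hγ : 0 < γ) (hlam : 0 < lam)
    (hx₀ : x₀ ∈ Ioo βm βp)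
    (b : ℝ → ℝ)
    (hb_bdd : ∃ C : ℝ, ∀ x ∈ Ioo βm βp, |b x| ≤ C)
    (hb_smooth : ContDiffOn ℝ 2 b (Ioo βm βp))
    (hb_lip : ∃ K : NNReal, LipschitzOnWith K b (Ioo βm βp))
    (V W f : ℝ → ℝ)
    (hV_smooth : ContDiffOn ℝ 2 V (Ioo βm βp))
    (hW : ∀ x ∈ Ioo βm βp,
      W x = γ/(2*η*σ^2) * (γ * V x + x - (2*η/γ) * ∫ y in x₀..x, b y))
    (hf : ∀ x ∈ Ioo βm βp,
      f x = -(γ/(σ^4*η)) * b x + (1/σ^2) * deriv b x + (1/σ^4) * (b x)^2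
        + (γ*lam/(σ^4*η)) * x - (2*lam/σ^4) * ∫ y in x₀..x, b y) :
    (∀ x ∈ Ioo βm βp,
        (1/2) * σ^2 * deriv (deriv V) x + b x * deriv V x - lam * V x
          - (γ * deriv V x + 1)^2 / (4*η) = 0)
    ↔ (∀ x ∈ Ioo βm βp,
        -deriv (deriv W) x + (deriv W x)^2 + (2*lam/σ^2) * W x = f x) := by
  have hD : IsOpen (Ioo βm βp) := isOpen_Ioo
  set D := Ioo βm βp with hDdef
  set c : ℝ := γ/(2*η*σ^2) with hc
  have hσ2 : (σ:ℝ)^2 ≠ 0 := by positivity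
  have hσ4 : (σ:ℝ)^4 ≠ 0 := by positivity
  have hη' : (η:ℝ) ≠ 0 := ne_of_gt hη
  have hγ' : (γ:ℝ) ≠ 0 := ne_of_gt hγ
  -- differentiability facts
  have hVdiff : DifferentiableOn ℝ V D := hV_smooth.differentiableOn (by norm_num)
  have hV'cd : ContDiffOn ℝ 1 (deriv V) D := hV_smooth.deriv_of_isOpen hD (by norm_num)
  have hV'diff : DifferentiableOn ℝ (deriv V) D := hV'cd.differentiableOn (by norm_num)
  have hbdiff : DifferentiableOn ℝ b D := hb_smooth.differentiableOn (by norm_num)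
  have hbcont : ContinuousOn b D := hb_smooth.continuousOn
  -- derivative of the integral
  have hI : ∀ x ∈ D, HasDerivAt (fun u => ∫ y in x₀..u, b y) (b x) x := by
    intro x hx
    have hsub : uIcc x₀ x ⊆ D := Set.ordConnected_Ioo.uIcc_subset hx₀ hx
    have hint : IntervalIntegrable b MeasureTheory.volume x₀ x :=
      (hbcont.mono hsub).intervalIntegrable
    have hmeas : StronglyMeasurableAtFilter b (𝓝 x) :=
      AEStronglyMeasurable.stronglyMeasurableAtFilter_of_mem
        (hbcont.aestronglyMeasurable measurableSet_Ioo) (hD.mem_nhds hx)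
    exact intervalIntegral.integral_hasDerivAt_right hint hmeas
      (hbcont.continuousAt (hD.mem_nhds hx))
  -- first derivative of W on D
  have hW1 : ∀ x ∈ D, HasDerivAt W (c * (γ * deriv V x + 1) - b x / σ^2) x := by
    intro x hx
    have hVx : HasDerivAt V (deriv V x) x :=
      ((hVdiff x hx).differentiableAt (hD.mem_nhds hx)).hasDerivAt
    have hF : HasDerivAt (fun u => c * (γ * V u + u - (2*η/γ) * ∫ y in x₀..u, b y))
        (c * (γ * deriv V x + 1 - (2*η/γ) * b x)) x := by
      exact (((hVx.const_mul γ).add (hasDerivAt_id x)).sub ((hI x hx).const_mul (2*η/γ))).const_mul c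
    have heq : W =ᶠ[𝓝 x] fun u => c * (γ * V u + u - (2*η/γ) * ∫ y in x₀..u, b y) := by
      filter_upwards [hD.mem_nhds hx] with u hu using hW u hu
    have hconst : c * (γ * deriv V x + 1 - (2*η/γ) * b x)
        = c * (γ * deriv V x + 1) - b x / σ^2 := by
      rw [hc]; field_simp
    exact hconst ▸ hF.congr_of_eventuallyEq heq
  have hW'eq : ∀ x ∈ D, deriv W x = c * (γ * deriv V x + 1) - b x / σ^2 := fun x hx =>
    (hW1 x hx).deriv
  -- second derivative of W on D
  have hW2 : ∀ x ∈ D, deriv (deriv W) x = c * γ * deriv (deriv V) x - deriv b x / σ^2 := by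
    intro x hx
    have hV'x : HasDerivAt (deriv V) (deriv (deriv V) x) x :=
      ((hV'diff x hx).differentiableAt (hD.mem_nhds hx)).hasDerivAt
    have hbx : HasDerivAt b (deriv b x) x :=
      ((hbdiff x hx).differentiableAt (hD.mem_nhds hx)).hasDerivAt
    have hg : HasDerivAt (fun u => c * (γ * deriv V u + 1) - b u / σ^2)
        (c * γ * deriv (deriv V) x - deriv b x / σ^2) x := by
      have := (((hV'x.const_mul γ).add_const 1).const_mul c).sub (hbx.div_const (σ^2))
      exact this.congr_deriv (by ring)
    have heq : deriv W =ᶠ[𝓝 x] fun u => c * (γ * deriv V u + 1) - b u / σ^2 := by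
      filter_upwards [hD.mem_nhds hx] with u hu using hW'eq u hu
    exact (hg.congr_of_eventuallyEq heq).deriv
  -- pointwise algebraic equivalence
  have key : ∀ x ∈ D,
      (-deriv (deriv W) x + (deriv W x)^2 + (2*lam/σ^2) * W x - f x)
        = -(γ^2/(η*σ^4)) * ((1/2) * σ^2 * deriv (deriv V) x + b x * deriv V x - lam * V x
          - (γ * deriv V x + 1)^2 / (4*η)) := by
    intro x hx
    rw [hW2 x hx, hW'eq x hx, hW x hx, hf x hx, hc]
    field_simp
    ring
  constructor
  · intro h x hx
    have := key x hx
    rw [h x hx, mul_zero] at this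
    linarith [this]
  · intro h x hx
    have hk := key x hx
    rw [sub_eq_zero.2 (h x hx)] at hk
    have hne : -(γ^2/(η*σ^4)) ≠ 0 := neg_ne_zero.2 (by positivity)
    exact (mul_eq_zero.1 hk.symm).resolve_left hne
end

section
/- Let β₋ < β₊ be real numbers, D = (β₋, β₊), let σ, η, γ, λ > 0 be constants, and let b : D → ℝ be bounded and continuous. Suppose V : D → ℝ is twice continuously differentiable, satisfies the reduced HJB equation (1/2)σ²V''(x) + b(x)V'(x) − λV(x) − (γV'(x) + 1)²/(4η) = 0 on D, and satisfies V(x) → +∞ as x approaches either endpoint of D from inside. Then V'(x) → −∞ as x → β₋ from the right and V'(x) → +∞ as x → β₊ from the left; equivalently, the feedback control û(x) = −(γV'(x) + 1)/(2η) satisfies û(x) → +∞ as x → β₋ from the right and û(x) → −∞ as x → β₊ from the left. -/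
open Set Filter Topology

set_option maxHeartbeats 1600000

/-- If `V` solves the reduced HJB equation on `D` and blows up at both endpoints, then
`V'(x) → −∞` as `x → β₋⁺` and `V'(x) → +∞` as `x → β₊⁻`; equivalently, the feedback
control `û(x) = −(γV'(x)+1)/(2η)` satisfies `û(x) → +∞` as `x → β₋⁺` and
`û(x) → −∞` as `x → β₊⁻`. -/
theorem feedback_blowup (βm βp σ η γ lam : ℝ) (hβ : βm < βp)
    (hσ : 0 < σ) (hη : 0 < η) (hγ : 0 < γ) (hlam : 0 < lam)
    (b : ℝ → ℝ)
    (hb_bdd : ∃ C : ℝ, ∀ x ∈ Ioo βm βp, |b x| ≤ C)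
    (hb_cont : ContinuousOn b (Ioo βm βp))
    (V : ℝ → ℝ)
    (hV_smooth : ContDiffOn ℝ 2 V (Ioo βm βp))
    (hV_hjb : ∀ x ∈ Ioo βm βp,
      (1/2) * σ^2 * deriv (deriv V) x + b x * deriv V x - lam * V x
        - (γ * deriv V x + 1)^2 / (4*η) = 0)
    (hV_bm : Tendsto V (𝓝[>] βm) atTop) (hV_bp : Tendsto V (𝓝[<] βp) atTop) :
    (Tendsto (deriv V) (𝓝[>] βm) atBot ∧ Tendsto (deriv V) (𝓝[<] βp) atTop)
    ∧ (Tendsto (fun x => -(γ * deriv V x + 1)/(2*η)) (𝓝[>] βm) atTop ∧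
       Tendsto (fun x => -(γ * deriv V x + 1)/(2*η)) (𝓝[<] βp) atBot) := by
  obtain ⟨C₀, hC₀⟩ := hb_bdd
  set C : ℝ := max C₀ 0 with hCdef
  have hCnn : 0 ≤ C := le_max_right _ _
  have hC : ∀ x ∈ Ioo βm βp, |b x| ≤ C := fun x hx => (hC₀ x hx).trans (le_max_left _ _)
  set K : ℝ := (4*η*C + 2*γ)^2 / (16*η*γ^2) with hKdef
  have hK : 16*η*γ^2*K = (4*η*C + 2*γ)^2 := by
    rw [hKdef]; field_simp
  set M : ℝ := (K + 1) / lam with hMdef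
  -- basic regularity facts
  have hVdiff : DifferentiableOn ℝ V (Ioo βm βp) := hV_smooth.differentiableOn (by norm_num)
  have hVd : ∀ x ∈ Ioo βm βp, DifferentiableAt ℝ V x := fun x hx =>
    (hVdiff x hx).differentiableAt (isOpen_Ioo.mem_nhds hx)
  have hVcont : ContinuousOn (deriv V) (Ioo βm βp) :=
    hV_smooth.continuousOn_deriv_of_isOpen isOpen_Ioo (by norm_num)
  -- key: where V is large, V'' > 0
  have key : ∀ x ∈ Ioo βm βp, M ≤ V x → 0 < deriv (deriv V) x := by
    intro x hx hM
    have hjb := hV_hjb x hx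
    have hb1 := abs_le.mp (hC x hx)
    set v := deriv V x with hv
    have hMV : K + 1 ≤ lam * V x := by
      rw [hMdef] at hM
      rw [div_le_iff₀ hlam] at hM
      nlinarith [hM]
    have h1 : 0 < lam * V x + (γ*v+1)^2/(4*η) - b x * v := by
      have hA : 0 < 4*η*(lam * V x) + (γ*v+1)^2 - 4*η*(b x * v) := by
        -- multiply everything by γ² to use hK
        rcases le_or_gt 0 v with hvpos | hvneg
        · nlinarith [sq_nonneg (γ^2*v - 2*η*C), mul_nonneg (sub_nonneg.2 hb1.2) hvpos,
            mul_pos hη hγ, mul_pos hη (mul_pos hγ hγ), sq_nonneg γ, hK, hMV,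
            mul_nonneg (mul_nonneg (mul_nonneg hγ.le hγ.le) hγ.le) hvpos,
            mul_le_mul_of_nonneg_left hMV (le_of_lt (mul_pos (mul_pos (by norm_num : (0:ℝ) < 4) hη) (mul_pos hγ hγ))),
            mul_nonneg (mul_nonneg (mul_nonneg hη.le hCnn) (mul_pos hγ hγ).le) (mul_nonneg (sub_nonneg.2 hb1.2) hvpos)]
        · have hprod : (b x + C) * v ≤ 0 :=
            mul_nonpos_of_nonneg_of_nonpos (by linarith [hb1.1]) hvneg.le
          nlinarith [sq_nonneg (γ^2*v + 2*η*C + γ), hprod,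
            mul_pos hη hγ, mul_pos hη (mul_pos hγ hγ), sq_nonneg γ, hK, hMV,
            mul_le_mul_of_nonneg_left hMV (le_of_lt (mul_pos (mul_pos (by norm_num : (0:ℝ) < 4) hη) (mul_pos hγ hγ))),
            mul_nonpos_of_nonneg_of_nonpos (mul_nonneg (mul_nonneg (by norm_num : (0:ℝ) ≤ 4) hη.le) (mul_pos hγ hγ).le) hprod]
      have heq : lam * V x + (γ*v+1)^2/(4*η) - b x * v
          = (4*η*(lam * V x) + (γ*v+1)^2 - 4*η*(b x * v)) / (4*η) := by
        field_simp
      rw [heq]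
      positivity
    have h2 : 0 < (1/2) * σ^2 * deriv (deriv V) x := by linarith
    nlinarith [pow_pos hσ 2, h2]
  -- derivative of comparison functions
  have hderivL : ∀ (L : ℝ) (x : ℝ), x ∈ Ioo βm βp →
      deriv (fun y => V y - L * y) x = deriv V x - L := by
    intro L x hx
    rw [deriv_fun_sub (hVd x hx) (by fun_prop), deriv_const_mul_field]
    simp
  have hderivR : ∀ (L : ℝ) (x : ℝ), x ∈ Ioo βm βp →
      deriv (fun y => L * y - V y) x = L - deriv V x := by
    intro L x hx
    rw [deriv_fun_sub (by fun_prop) (hVd x hx), deriv_const_mul_field]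
    simp
  -- ### Left endpoint
  have hleft : Tendsto (deriv V) (𝓝[>] βm) atBot := by
    have hev : ∀ᶠ x in 𝓝[>] βm, M ≤ V x ∧ x ∈ Ioo βm βp :=
      (hV_bm.eventually (eventually_ge_atTop M)).and
        (eventually_of_mem (Ioo_mem_nhdsGT hβ) fun x hx => hx)
    obtain ⟨u, hu, hsub⟩ := mem_nhdsGT_iff_exists_Ioo_subset.mp hev
    set c : ℝ := min u βp with hcdef
    have hc1 : βm < c := lt_min hu hβ
    have hmem : ∀ x ∈ Ioo βm c, M ≤ V x ∧ x ∈ Ioo βm βp := by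
      intro x hx
      exact hsub ⟨hx.1, lt_of_lt_of_le hx.2 (min_le_left _ _)⟩
    have hsubIoo : Ioo βm c ⊆ Ioo βm βp := fun x hx => (hmem x hx).2
    have hpos : ∀ x ∈ Ioo βm c, 0 < deriv (deriv V) x := fun x hx =>
      key x (hmem x hx).2 (hmem x hx).1
    have hmono : StrictMonoOn (deriv V) (Ioo βm c) :=
      strictMonoOn_of_deriv_pos (convex_Ioo _ _) (hVcont.mono hsubIoo)
        (by rw [interior_Ioo]; exact hpos)
    have claim : ∀ L : ℝ, ∃ x ∈ Ioo βm c, deriv V x < L := by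
      intro L
      by_contra hcon
      push_neg at hcon
      set x₀ : ℝ := (βm + c) / 2 with hx₀def
      have hx₀ : x₀ ∈ Ioo βm c := ⟨by simp [hx₀def]; linarith, by simp [hx₀def]; linarith⟩
      have hgmono : MonotoneOn (fun y => V y - L * y) (Ioo βm c) := by
        apply monotoneOn_of_deriv_nonneg (convex_Ioo _ _)
        · exact ((hVdiff.continuousOn).mono hsubIoo).sub (by fun_prop)
        · rw [interior_Ioo]
          exact fun x hx => ((hVd x (hsubIoo hx)).sub (by fun_prop)).differentiableWithinAt
        · rw [interior_Ioo]
          intro x hx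
          rw [hderivL L x (hsubIoo hx)]
          linarith [hcon x hx]
      set B : ℝ := V x₀ + |L| * (βp - βm) with hBdef
      have hbound : ∀ x ∈ Ioo βm x₀, V x ≤ B := by
        intro x hx
        have hxs : x ∈ Ioo βm c := ⟨hx.1, hx.2.trans hx₀.2⟩
        have hg := hgmono hxs hx₀ hx.2.le
        simp only at hg
        have h1 : 0 ≤ (|L| + L) * (x₀ - x) :=
          mul_nonneg (by linarith [neg_abs_le L]) (by linarith [hx.2])
        have h2 : |L| * (x₀ - x) ≤ |L| * (βp - βm) := by
          apply mul_le_mul_of_nonneg_left _ (abs_nonneg L)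
          linarith [(hsubIoo hx₀).2, hx.1]
        rw [hBdef]
        linarith
      have hx₀m : βm < x₀ := hx₀.1
      have : ∀ᶠ x in 𝓝[>] βm, B < V x ∧ x ∈ Ioo βm x₀ :=
        (hV_bm.eventually (eventually_gt_atTop B)).and
          (eventually_of_mem (Ioo_mem_nhdsGT hx₀m) fun x hx => hx)
      obtain ⟨x, hx1, hx2⟩ := this.exists
      exact absurd (hbound x hx2) (not_le.2 hx1)
    rw [tendsto_atBot]
    intro L
    obtain ⟨x₁, hx₁, hlt⟩ := claim L
    filter_upwards [Ioo_mem_nhdsGT hx₁.1] with x hx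
    exact le_of_lt (lt_trans (hmono ⟨hx.1, hx.2.trans hx₁.2⟩ hx₁ hx.2) hlt)
  -- ### Right endpoint
  have hright : Tendsto (deriv V) (𝓝[<] βp) atTop := by
    have hev : ∀ᶠ x in 𝓝[<] βp, M ≤ V x ∧ x ∈ Ioo βm βp :=
      (hV_bp.eventually (eventually_ge_atTop M)).and
        (eventually_of_mem (Ioo_mem_nhdsLT hβ) fun x hx => hx)
    obtain ⟨u, hu, hsub⟩ := mem_nhdsLT_iff_exists_Ioo_subset.mp hev
    set c : ℝ := max u βm with hcdef
    have hc1 : c < βp := max_lt hu hβ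
    have hmem : ∀ x ∈ Ioo c βp, M ≤ V x ∧ x ∈ Ioo βm βp := by
      intro x hx
      exact hsub ⟨lt_of_le_of_lt (le_max_left _ _) hx.1, hx.2⟩
    have hsubIoo : Ioo c βp ⊆ Ioo βm βp := fun x hx => (hmem x hx).2
    have hpos : ∀ x ∈ Ioo c βp, 0 < deriv (deriv V) x := fun x hx =>
      key x (hmem x hx).2 (hmem x hx).1
    have hmono : StrictMonoOn (deriv V) (Ioo c βp) :=
      strictMonoOn_of_deriv_pos (convex_Ioo _ _) (hVcont.mono hsubIoo)
        (by rw [interior_Ioo]; exact hpos)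
    have claim : ∀ L : ℝ, ∃ x ∈ Ioo c βp, L < deriv V x := by
      intro L
      by_contra hcon
      push_neg at hcon
      set x₀ : ℝ := (c + βp) / 2 with hx₀def
      have hx₀ : x₀ ∈ Ioo c βp := ⟨by simp [hx₀def]; linarith, by simp [hx₀def]; linarith⟩
      have hgmono : MonotoneOn (fun y => L * y - V y) (Ioo c βp) := by
        apply monotoneOn_of_deriv_nonneg (convex_Ioo _ _)
        · exact ContinuousOn.sub (by fun_prop) ((hVdiff.continuousOn).mono hsubIoo)
        · rw [interior_Ioo]
          exact fun x hx =>
            (DifferentiableAt.sub (by fun_prop) (hVd x (hsubIoo hx))).differentiableWithinAt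
        · rw [interior_Ioo]
          intro x hx
          rw [hderivR L x (hsubIoo hx)]
          linarith [hcon x hx]
      set B : ℝ := V x₀ + |L| * (βp - βm) with hBdef
      have hbound : ∀ x ∈ Ioo x₀ βp, V x ≤ B := by
        intro x hx
        have hxs : x ∈ Ioo c βp := ⟨hx₀.1.trans hx.1, hx.2⟩
        have hg := hgmono hx₀ hxs hx.1.le
        simp only at hg
        have h1 : 0 ≤ (|L| - L) * (x - x₀) :=
          mul_nonneg (by linarith [le_abs_self L]) (by linarith [hx.1])
        have h2 : |L| * (x - x₀) ≤ |L| * (βp - βm) := by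
          apply mul_le_mul_of_nonneg_left _ (abs_nonneg L)
          linarith [(hsubIoo hx₀).1, hx.2]
        rw [hBdef]
        linarith
      have hx₀m : x₀ < βp := hx₀.2
      have : ∀ᶠ x in 𝓝[<] βp, B < V x ∧ x ∈ Ioo x₀ βp :=
        (hV_bp.eventually (eventually_gt_atTop B)).and
          (eventually_of_mem (Ioo_mem_nhdsLT hx₀m) fun x hx => hx)
      obtain ⟨x, hx1, hx2⟩ := this.exists
      exact absurd (hbound x hx2) (not_le.2 hx1)
    rw [tendsto_atTop]
    intro L
    obtain ⟨x₁, hx₁, hlt⟩ := claim L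
    filter_upwards [Ioo_mem_nhdsLT hx₁.2] with x hx
    exact le_of_lt (lt_trans hlt (hmono hx₁ ⟨hx₁.1.trans hx.1, hx.2⟩ hx.1))
  -- ### Feedback control statements
  have hslope : -γ / (2*η) < 0 := div_neg_of_neg_of_pos (by linarith) (by linarith)
  have heq : ∀ y : ℝ, -(γ * y + 1)/(2*η) = (-γ/(2*η)) * y + (-1/(2*η)) := by
    intro y; field_simp; ring
  refine ⟨⟨hleft, hright⟩, ?_, ?_⟩
  · have h1 : Tendsto (fun x => (-γ/(2*η)) * deriv V x + (-1/(2*η))) (𝓝[>] βm) atTop :=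
      tendsto_atTop_add_const_right _ _ (hleft.const_mul_atBot_of_neg hslope)
    exact h1.congr fun x => (heq (deriv V x)).symm
  · have h1 : Tendsto (fun x => (-γ/(2*η)) * deriv V x + (-1/(2*η))) (𝓝[<] βp) atBot :=
      tendsto_atBot_add_const_right _ _ (hright.const_mul_atTop_of_neg hslope)
    exact h1.congr fun x => (heq (deriv V x)).symm
end
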